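/- Let T = [[a, b], [c, d]] be a real 2×2 matrix with nonnegative entries whose columns sum to one (a + c = 1 and b + d = 1) and which satisfies a > c, d > b, b > 0, and c > 0. Define g : (0,1) → ℝ by g(p) = −(T⁻¹)_{1,1}·log p − (T⁻¹)_{2,1}·log(1−p). Then g(p) tends to −∞ as p tends to 1 from the left; in particular g is unbounded below on (0,1). -/
import Mathlib


open Filter

/-- **Instability of the Backward loss (binary case).** With `T = !![a, b; c, d]` column
stochastic, nonnegative, `a > c`, `d > b`, `b > 0`, `c > 0`, the Backward loss
`g p = −(T⁻¹)₁₁ log p − (T⁻¹)₂₁ log (1 − p)` on `(0,1)` tends to `−∞` as `p → 1⁻`;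
in particular `g` is unbounded below on `(0,1)`. -/
theorem backward_loss_unbounded_below
    (a b c d : ℝ)
    (ha : 0 ≤ a) (hd : 0 ≤ d) (hb : 0 < b) (hc : 0 < c)
    (hcol1 : a + c = 1) (hcol2 : b + d = 1)
    (hac : c < a) (hdb : b < d)
    (g : ℝ → ℝ)
    (hg : ∀ p ∈ Set.Ioo (0 : ℝ) 1,
      g p = -((!![a, b; c, d] : Matrix (Fin 2) (Fin 2) ℝ)⁻¹ 0 0) * Real.log p
            - ((!![a, b; c, d] : Matrix (Fin 2) (Fin 2) ℝ)⁻¹ 1 0) * Real.log (1 - p)) :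
    Tendsto g (nhdsWithin 1 (Set.Iio 1)) atBot ∧
    ¬ BddBelow (g '' Set.Ioo 0 1) := by
  set T : Matrix (Fin 2) (Fin 2) ℝ := !![a, b; c, d] with hT
  have hdet : T.det = a * d - b * c := by simp [hT, Matrix.det_fin_two_of]
  have hk : 0 < a * d - b * c := by nlinarith
  have hInv : T⁻¹ = (a * d - b * c)⁻¹ • !![d, -b; -c, a] := by
    rw [Matrix.inv_def, hdet, Matrix.adjugate_fin_two_of, Ring.inverse_eq_inv]
  have h00 : T⁻¹ 0 0 = d / (a * d - b * c) := by
    rw [hInv]; simp [div_eq_inv_mul]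
  have h10 : T⁻¹ 1 0 = -c / (a * d - b * c) := by
    rw [hInv]; simp [div_eq_inv_mul]
  -- the model function
  set f : ℝ → ℝ := fun p => -(d / (a * d - b * c)) * Real.log p
      + (c / (a * d - b * c)) * Real.log (1 - p) with hf
  have hgf : ∀ p ∈ Set.Ioo (0 : ℝ) 1, g p = f p := by
    intro p hp
    rw [hg p hp, h00, h10, hf]
    ring
  have hmem : ∀ᶠ p in nhdsWithin (1:ℝ) (Set.Iio 1), p ∈ Set.Ioo (0:ℝ) 1 := by
    filter_upwards [Ioo_mem_nhdsLT_of_mem (by norm_num : (1:ℝ) ∈ Set.Ioc (0:ℝ) 1)] with p hp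
    exact hp
  have heq : g =ᶠ[nhdsWithin (1:ℝ) (Set.Iio 1)] f := by
    filter_upwards [hmem] with p hp using hgf p hp
  -- limits
  have hlog1 : Tendsto (fun p : ℝ => -(d / (a * d - b * c)) * Real.log p)
      (nhdsWithin (1:ℝ) (Set.Iio 1)) (nhds 0) := by
    have : Tendsto (fun p : ℝ => -(d / (a * d - b * c)) * Real.log p) (nhds 1)
        (nhds (-(d / (a * d - b * c)) * Real.log 1)) := by
      exact (Real.continuousAt_log (by norm_num)).const_mul _
    simpa using this.mono_left nhdsWithin_le_nhds
  have hsub : Tendsto (fun p : ℝ => 1 - p) (nhdsWithin (1:ℝ) (Set.Iio 1))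
      (nhdsWithin (0:ℝ) (Set.Ioi 0)) := by
    apply tendsto_nhdsWithin_of_tendsto_nhds_of_eventually_within
    · have : Tendsto (fun p : ℝ => 1 - p) (nhds 1) (nhds (1 - 1)) :=
        tendsto_const_nhds.sub tendsto_id
      simpa using this.mono_left nhdsWithin_le_nhds
    · filter_upwards [self_mem_nhdsWithin] with p (hp : p < 1)
      exact Set.mem_Ioi.2 (sub_pos.2 hp)
  have hlog2 : Tendsto (fun p : ℝ => Real.log (1 - p)) (nhdsWithin (1:ℝ) (Set.Iio 1)) atBot :=
    Real.tendsto_log_nhdsGT_zero.comp hsub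
  have hcpos : 0 < c / (a * d - b * c) := div_pos hc hk
  have hlog2' : Tendsto (fun p : ℝ => (c / (a * d - b * c)) * Real.log (1 - p))
      (nhdsWithin (1:ℝ) (Set.Iio 1)) atBot := by
    exact Tendsto.const_mul_atBot hcpos hlog2
  have hfbot : Tendsto f (nhdsWithin (1:ℝ) (Set.Iio 1)) atBot := by
    rw [hf]
    exact hlog1.add_atBot hlog2'
  have hgbot : Tendsto g (nhdsWithin (1:ℝ) (Set.Iio 1)) atBot := hfbot.congr' heq.symm
  refine ⟨hgbot, ?_⟩
  rintro ⟨m, hm⟩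
  have hev : ∀ᶠ p in nhdsWithin (1:ℝ) (Set.Iio 1), g p < m :=
    hgbot.eventually (eventually_lt_atBot m)
  obtain ⟨p, hp1, hp2⟩ := (hev.and hmem).exists
  exact absurd (hm (Set.mem_image_of_mem g hp2)) (not_le.2 hp1)
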